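/- arXiv:1911.00799 — 3 statements merged into one kernel-verified Lean document; each statement's English description precedes it below -/
import Mathlib

section
/- Supermartingale-type decrease towards a fixed solution (key inequality in the proof of Theorem 4.3): for any fixed primal-dual solution z^* = (x^*, y^*) ∈ Z^* and every k ≥ 1, E_k[V_{k+1}(x^k − x^*, y^{k+1} − y^*)] ≤ V_k(x^{k−1} − x^*, y^k − y^*) − V(z^k − z^{k−1}), where z^k = (x^k, y^k). -/
noncomputable section

open Finset

local notation "⟪" x ", " y "⟫" => @inner ℝ _ _ x y

/-- `v = prox_{t·h}(u)`: `v` minimizes `w ↦ h w + ‖w − u‖²/(2t)`. -/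
def IsProx {E : Type*} [NormedAddCommGroup E] [InnerProductSpace ℝ E]
    (t : ℝ) (h : E → ℝ) (u v : E) : Prop :=
  ∀ w, h v + ‖v - u‖ ^ 2 / (2 * t) ≤ h w + ‖w - u‖ ^ 2 / (2 * t)

/-- Convex subdifferential of `h` at `x`. -/
def subdiffAt {E : Type*} [NormedAddCommGroup E] [InnerProductSpace ℝ E]
    (h : E → ℝ) (x : E) : Set E :=
  {v | ∀ z, h x + ⟪v, z - x⟫ ≤ h z}

/-- `A^⊤ y = ∑ i (A i)^* (y i)`. -/
def AT {X : Type*} [NormedAddCommGroup X] [InnerProductSpace ℝ X] [CompleteSpace X]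
    {n : ℕ} {Y : Fin n → Type*} [∀ i, NormedAddCommGroup (Y i)]
    [∀ i, InnerProductSpace ℝ (Y i)] [∀ i, CompleteSpace (Y i)]
    (A : ∀ i, X →L[ℝ] Y i) (y : ∀ i, Y i) : X :=
  ∑ i, (A i).adjoint (y i)

/-- A prox point satisfies the subgradient inequality `(u - v)/t ∈ ∂h(v)`. -/
lemma prox_subgrad {E : Type*} [NormedAddCommGroup E] [InnerProductSpace ℝ E]
    {h : E → ℝ} (hc : ConvexOn ℝ Set.univ h) {t : ℝ} (ht : 0 < t) {u v : E}
    (hpx : IsProx t h u v) (w : E) :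
    h v + t⁻¹ * ⟪u - v, w - v⟫ ≤ h w := by
  set C := ‖w - v‖ ^ 2 / (2 * t) with hCdef
  have hC0 : (0:ℝ) ≤ C := by positivity
  refine le_of_forall_pos_le_add ?_
  intro ε hε
  set s := min 1 (ε / (C + 1)) with hsdef
  have hs0 : 0 < s := lt_min one_pos (by positivity)
  have hs1 : s ≤ 1 := min_le_left _ _
  have hsC : s * C ≤ ε := by
    have h1 : s ≤ ε / (C + 1) := min_le_right _ _
    have h2 : s * (C + 1) ≤ ε := by
      rw [← le_div_iff₀ (by linarith)]; exact h1
    nlinarith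
  have hkey := hpx (v + s • (w - v))
  have hconv : h (v + s • (w - v)) ≤ (1 - s) * h v + s * h w := by
    have h2 := hc.2 (Set.mem_univ v) (Set.mem_univ w)
      (by linarith : (0:ℝ) ≤ 1 - s) hs0.le (by ring)
    have he : (1 - s) • v + s • w = v + s • (w - v) := by
      rw [sub_smul, one_smul, smul_sub]; abel
    rwa [he] at h2
  have hnorm : ‖v + s • (w - v) - u‖ ^ 2
      = ‖v - u‖ ^ 2 + 2 * (s * ⟪v - u, w - v⟫) + s ^ 2 * ‖w - v‖ ^ 2 := by
    have h1 : v + s • (w - v) - u = (v - u) + s • (w - v) := by abel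
    rw [h1, norm_add_sq_real, real_inner_smul_right, norm_smul]
    rw [mul_pow, Real.norm_eq_abs, sq_abs]
  have hflip : ⟪u - v, w - v⟫ = -⟪v - u, w - v⟫ := by
    rw [← neg_sub v u, inner_neg_left]
  have hdiv : (‖v - u‖ ^ 2 + 2 * (s * ⟪v - u, w - v⟫) + s ^ 2 * ‖w - v‖ ^ 2) / (2 * t)
      = ‖v - u‖ ^ 2 / (2 * t) + s * (t⁻¹ * ⟪v - u, w - v⟫) + s ^ 2 * C := by
    rw [hCdef]; field_simp
  have hexp1 : (1 - s) * h v = h v - s * h v := by ring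
  have hkey2 : s * h v ≤ s * h w + s * (t⁻¹ * ⟪v - u, w - v⟫) + s ^ 2 * C := by
    rw [hnorm, hdiv] at hkey
    linarith [hkey, hconv, hexp1]
  have hmain : s * (h v + t⁻¹ * ⟪u - v, w - v⟫) ≤ s * (h w + s * C) := by
    rw [hflip]; nlinarith [hkey2]
  have hdivs := (mul_le_mul_iff_right₀ hs0).mp hmain
  nlinarith [hdivs]

/-- Three-point inner product identity. -/
lemma inner_sub_sub' {E : Type*} [NormedAddCommGroup E] [InnerProductSpace ℝ E]
    (a b c : E) : ⟪a - c, b - c⟫ = (‖a - c‖ ^ 2 + ‖b - c‖ ^ 2 - ‖a - b‖ ^ 2) / 2 := by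
  have h := @norm_sub_sq_real E _ _ (a - c) (b - c)
  have h2 : (a - c) - (b - c) = a - b := by abel
  rw [h2] at h; linarith

/-- Supermartingale-type decrease towards a fixed solution (key inequality in the proof of
Theorem 4.3): for any fixed primal-dual solution `z^* = (x^*, y^*) ∈ Z^*` and every `k ≥ 1`,
`E_k[V_{k+1}(x^k − x^*, y^{k+1} − y^*)] ≤ V_k(x^{k−1} − x^*, y^k − y^*) − V(z^k − z^{k−1})`,
where `E_k` is the `p`-weighted average over the index `i_k` drawn at step `k`. -/
theorem spdhg_supermartingale_decrease
    {X : Type*} [NormedAddCommGroup X] [InnerProductSpace ℝ X] [FiniteDimensional ℝ X]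
    {n : ℕ} {Y : Fin n → Type*} [∀ i, NormedAddCommGroup (Y i)]
    [∀ i, InnerProductSpace ℝ (Y i)] [∀ i, FiniteDimensional ℝ (Y i)]
    (g : X → ℝ) (fstar : ∀ i, Y i → ℝ)
    (hg : ConvexOn ℝ Set.univ g) (hfs : ∀ i, ConvexOn ℝ Set.univ (fstar i))
    (A : ∀ i, X →L[ℝ] Y i)
    (p σ : Fin n → ℝ) (τ γ : ℝ)
    (hp : ∀ i, 0 < p i) (hpsum : ∑ i, p i = 1)
    (hτ : 0 < τ) (hσ : ∀ i, 0 < σ i) (hγ0 : 0 < γ) (hγ1 : γ < 1)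
    (hstep : ∀ i, (p i)⁻¹ * τ * σ i * ‖A i‖ ^ 2 ≤ γ ^ 2)
    -- a primal-dual solution z^* = (x^*, y^*)
    (xstar : X) (ystar : ∀ i, Y i)
    (hsolx : -(AT A ystar) ∈ subdiffAt g xstar)
    (hsoly : ∀ i, A i xstar ∈ subdiffAt (fstar i) (ystar i))
    -- SPDHG iterates at step k: x^{k−1}, y^{k−1}, y^k, x^k, ŷ^{k+1}
    (xprev : X) (yprev ycur : ∀ i, Y i) (xcur : X)
    (hx : IsProx τ g
      (xprev - τ • AT A (fun j => ycur j + (p j)⁻¹ • (ycur j - yprev j))) xcur)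
    (yh : ∀ i, Y i)
    (hyh : ∀ i, IsProx (σ i) (fstar i) (ycur i + σ i • A i xcur) (yh i)) :
    -- E_k[V_{k+1}(x^k − x^*, y^{k+1} − y^*)]
    (∑ l, p l *
        ((1 / 2) * (τ⁻¹ * ‖xcur - xstar‖ ^ 2)
          - (∑ i, (p i)⁻¹ * ⟪A i (xcur - xstar),
              Function.update ycur l (yh l) i - ycur i⟫)
          + (1 / 2) * (∑ i, (σ i * p i)⁻¹ *
              ‖Function.update ycur l (yh l) i - ycur i‖ ^ 2)
          + (1 / 2) * (∑ i, (σ i * p i)⁻¹ *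
              ‖Function.update ycur l (yh l) i - ystar i‖ ^ 2)))
    ≤
    -- V_k(x^{k−1} − x^*, y^k − y^*)
    ((1 / 2) * (τ⁻¹ * ‖xprev - xstar‖ ^ 2)
      - (∑ i, (p i)⁻¹ * ⟪A i (xprev - xstar), ycur i - yprev i⟫)
      + (1 / 2) * (∑ i, (σ i * p i)⁻¹ * ‖ycur i - yprev i‖ ^ 2)
      + (1 / 2) * (∑ i, (σ i * p i)⁻¹ * ‖ycur i - ystar i‖ ^ 2))
    -- − V(z^k − z^{k−1})
    - ((1 / 2) * (τ⁻¹ * ‖xcur - xprev‖ ^ 2)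
        + (1 / 2) * (∑ i, (σ i * p i)⁻¹ * ‖ycur i - yprev i‖ ^ 2)
        + ∑ i, (p i)⁻¹ * ⟪A i (xcur - xprev), ycur i - yprev i⟫) := by
  -- adjoint formula
  have hAT : ∀ (w : ∀ i, Y i) (z : X), ⟪AT A w, z⟫ = ∑ i, ⟪w i, A i z⟫ := by
    intro w z
    simp [AT, sum_inner, ContinuousLinearMap.adjoint_inner_left]
  have hybar : ∀ z : X,
      ⟪AT A (fun j => ycur j + (p j)⁻¹ • (ycur j - yprev j)), z⟫ - ⟪AT A ystar, z⟫
      = ∑ i, (⟪A i z, ycur i - ystar i⟫ + (p i)⁻¹ * ⟪A i z, ycur i - yprev i⟫) := by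
    intro z
    rw [hAT, hAT, ← Finset.sum_sub_distrib]
    refine Finset.sum_congr rfl fun i _ => ?_
    simp only [inner_add_left, real_inner_smul_left, inner_sub_left, inner_sub_right]
    rw [real_inner_comm (A i z) (ycur i), real_inner_comm (A i z) (ystar i),
      real_inner_comm (A i z) (yprev i)]
    ring
  -- primal inequality (KX)
  have F1 : τ⁻¹ * ((‖xcur - xprev‖ ^ 2 + ‖xcur - xstar‖ ^ 2 - ‖xprev - xstar‖ ^ 2) / 2)
      ≤ -(∑ i, (⟪A i (xcur - xstar), ycur i - ystar i⟫
            + (p i)⁻¹ * ⟪A i (xcur - xstar), ycur i - yprev i⟫)) := by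
    have P1 := prox_subgrad hg hτ hx xstar
    have e1 : (xprev - τ • AT A (fun j => ycur j + (p j)⁻¹ • (ycur j - yprev j))) - xcur
        = (xprev - xcur) - τ • AT A (fun j => ycur j + (p j)⁻¹ • (ycur j - yprev j)) := by
      abel
    rw [e1, inner_sub_left, real_inner_smul_left] at P1
    have P2 : g xstar + ⟪-(AT A ystar), xcur - xstar⟫ ≤ g xcur := hsolx xcur
    rw [inner_neg_left] at P2
    have e2 : ⟪AT A (fun j => ycur j + (p j)⁻¹ • (ycur j - yprev j)), xstar - xcur⟫
        = -⟪AT A (fun j => ycur j + (p j)⁻¹ • (ycur j - yprev j)), xcur - xstar⟫ := by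
      rw [← neg_sub xcur xstar, inner_neg_right]
    have e3 : τ⁻¹ * (⟪xprev - xcur, xstar - xcur⟫
          - τ * ⟪AT A (fun j => ycur j + (p j)⁻¹ • (ycur j - yprev j)), xstar - xcur⟫)
        = τ⁻¹ * ⟪xprev - xcur, xstar - xcur⟫
          - ⟪AT A (fun j => ycur j + (p j)⁻¹ • (ycur j - yprev j)), xstar - xcur⟫ := by
      field_simp
    have hb := hybar (xcur - xstar)
    have e4 : ⟪xprev - xcur, xstar - xcur⟫
        = (‖xcur - xprev‖ ^ 2 + ‖xcur - xstar‖ ^ 2 - ‖xprev - xstar‖ ^ 2) / 2 := by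
      rw [inner_sub_sub' xprev xstar xcur, norm_sub_rev xprev xcur, norm_sub_rev xstar xcur]
    rw [e3, e2, e4] at P1
    linarith [P1, P2, hb]
  -- dual inequalities (KY i)
  have F2 : ∀ i, (σ i)⁻¹ * ((‖yh i - ycur i‖ ^ 2 + ‖yh i - ystar i‖ ^ 2
        - ‖ycur i - ystar i‖ ^ 2) / 2)
      ≤ ⟪A i (xcur - xstar), yh i - ycur i⟫ + ⟪A i (xcur - xstar), ycur i - ystar i⟫ := by
    intro i
    have Q1 := prox_subgrad (hfs i) (hσ i) (hyh i) (ystar i)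
    have e1 : (ycur i + σ i • A i xcur) - yh i = (ycur i - yh i) + σ i • A i xcur := by
      abel
    rw [e1, inner_add_left, real_inner_smul_left] at Q1
    have Q2 : fstar i (ystar i) + ⟪A i xstar, yh i - ystar i⟫ ≤ fstar i (yh i) :=
      hsoly i (yh i)
    have e2 : ⟪A i xcur, ystar i - yh i⟫ = -⟪A i xcur, yh i - ystar i⟫ := by
      rw [← neg_sub (yh i) (ystar i), inner_neg_right]
    have e3 : (σ i)⁻¹ * (⟪ycur i - yh i, ystar i - yh i⟫ + σ i * ⟪A i xcur, ystar i - yh i⟫)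
        = (σ i)⁻¹ * ⟪ycur i - yh i, ystar i - yh i⟫ + ⟪A i xcur, ystar i - yh i⟫ := by
      linear_combination ⟪A i xcur, ystar i - yh i⟫ * inv_mul_cancel₀ (hσ i).ne'
    have e4 : ⟪ycur i - yh i, ystar i - yh i⟫
        = (‖yh i - ycur i‖ ^ 2 + ‖yh i - ystar i‖ ^ 2 - ‖ycur i - ystar i‖ ^ 2) / 2 := by
      rw [inner_sub_sub' (ycur i) (ystar i) (yh i), norm_sub_rev (ycur i) (yh i),
        norm_sub_rev (ystar i) (yh i)]
    have e5 : ⟪A i (xcur - xstar), yh i - ystar i⟫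
        = ⟪A i (xcur - xstar), yh i - ycur i⟫ + ⟪A i (xcur - xstar), ycur i - ystar i⟫ := by
      rw [← inner_add_right]
      congr 1
      abel
    have e6 : ⟪A i (xcur - xstar), yh i - ystar i⟫
        = ⟪A i xcur, yh i - ystar i⟫ - ⟪A i xstar, yh i - ystar i⟫ := by
      rw [map_sub, inner_sub_left]
    rw [e3, e2, e4] at Q1
    linarith [Q1, Q2, e5, e6]
  have F2sum := Finset.sum_le_sum (fun i (_ : i ∈ Finset.univ) => F2 i)
  -- expectation simplifications
  have hsum1 : ∀ l, (∑ i, (p i)⁻¹ * ⟪A i (xcur - xstar),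
        Function.update ycur l (yh l) i - ycur i⟫)
      = (p l)⁻¹ * ⟪A l (xcur - xstar), yh l - ycur l⟫ := by
    intro l
    rw [Finset.sum_eq_single_of_mem l (Finset.mem_univ l)
      (fun b _ hbl => by simp [Function.update_of_ne hbl])]
    simp
  have hsum2 : ∀ l, (∑ i, (σ i * p i)⁻¹ *
        ‖Function.update ycur l (yh l) i - ycur i‖ ^ 2)
      = (σ l * p l)⁻¹ * ‖yh l - ycur l‖ ^ 2 := by
    intro l
    rw [Finset.sum_eq_single_of_mem l (Finset.mem_univ l)
      (fun b _ hbl => by simp [Function.update_of_ne hbl])]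
    simp
  have hsum3 : ∀ l, (∑ i, (σ i * p i)⁻¹ *
        ‖Function.update ycur l (yh l) i - ystar i‖ ^ 2)
      = (∑ i, (σ i * p i)⁻¹ * ‖ycur i - ystar i‖ ^ 2)
        + (σ l * p l)⁻¹ * (‖yh l - ystar l‖ ^ 2 - ‖ycur l - ystar l‖ ^ 2) := by
    intro l
    have h1 : ∑ b, ((σ b * p b)⁻¹ * ‖Function.update ycur l (yh l) b - ystar b‖ ^ 2
          - (σ b * p b)⁻¹ * ‖ycur b - ystar b‖ ^ 2)
        = (σ l * p l)⁻¹ * ‖Function.update ycur l (yh l) l - ystar l‖ ^ 2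
          - (σ l * p l)⁻¹ * ‖ycur l - ystar l‖ ^ 2 :=
      Finset.sum_eq_single_of_mem l (Finset.mem_univ l)
        (fun b _ hbl => by simp [Function.update_of_ne hbl])
    rw [Finset.sum_sub_distrib] at h1
    simp only [Function.update_self] at h1
    linarith [h1]
  simp only [hsum1, hsum2, hsum3]
  -- split the expectation
  have hsplit : (∑ l, p l *
        ((1 / 2) * (τ⁻¹ * ‖xcur - xstar‖ ^ 2)
          - (p l)⁻¹ * ⟪A l (xcur - xstar), yh l - ycur l⟫
          + (1 / 2) * ((σ l * p l)⁻¹ * ‖yh l - ycur l‖ ^ 2)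
          + (1 / 2) * ((∑ i, (σ i * p i)⁻¹ * ‖ycur i - ystar i‖ ^ 2)
              + (σ l * p l)⁻¹ * (‖yh l - ystar l‖ ^ 2 - ‖ycur l - ystar l‖ ^ 2))))
      = (1 / 2) * (τ⁻¹ * ‖xcur - xstar‖ ^ 2)
        + (1 / 2) * (∑ i, (σ i * p i)⁻¹ * ‖ycur i - ystar i‖ ^ 2)
        + ∑ l, (-(⟪A l (xcur - xstar), yh l - ycur l⟫)
            + (1 / 2) * ((σ l)⁻¹ * ‖yh l - ycur l‖ ^ 2)
            + (1 / 2) * ((σ l)⁻¹ * (‖yh l - ystar l‖ ^ 2 - ‖ycur l - ystar l‖ ^ 2))) := by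
    have hterm : ∀ l ∈ Finset.univ, p l *
        ((1 / 2) * (τ⁻¹ * ‖xcur - xstar‖ ^ 2)
          - (p l)⁻¹ * ⟪A l (xcur - xstar), yh l - ycur l⟫
          + (1 / 2) * ((σ l * p l)⁻¹ * ‖yh l - ycur l‖ ^ 2)
          + (1 / 2) * ((∑ i, (σ i * p i)⁻¹ * ‖ycur i - ystar i‖ ^ 2)
              + (σ l * p l)⁻¹ * (‖yh l - ystar l‖ ^ 2 - ‖ycur l - ystar l‖ ^ 2)))
        = p l * ((1 / 2) * (τ⁻¹ * ‖xcur - xstar‖ ^ 2)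
            + (1 / 2) * (∑ i, (σ i * p i)⁻¹ * ‖ycur i - ystar i‖ ^ 2))
          + (-(⟪A l (xcur - xstar), yh l - ycur l⟫)
            + (1 / 2) * ((σ l)⁻¹ * ‖yh l - ycur l‖ ^ 2)
            + (1 / 2) * ((σ l)⁻¹ * (‖yh l - ystar l‖ ^ 2 - ‖ycur l - ystar l‖ ^ 2))) := by
      intro l _
      have h1 : p l ≠ 0 := (hp l).ne'
      have h2 : σ l ≠ 0 := (hσ l).ne'
      field_simp
      ring
    rw [Finset.sum_congr rfl hterm, Finset.sum_add_distrib, ← Finset.sum_mul, hpsum, one_mul]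
  rw [hsplit]
  -- connect RHS inner-product sums
  have E4 : (∑ i, (p i)⁻¹ * ⟪A i (xprev - xstar), ycur i - yprev i⟫)
        + (∑ i, (p i)⁻¹ * ⟪A i (xcur - xprev), ycur i - yprev i⟫)
      = ∑ i, (p i)⁻¹ * ⟪A i (xcur - xstar), ycur i - yprev i⟫ := by
    rw [← Finset.sum_add_distrib]
    refine Finset.sum_congr rfl fun i _ => ?_
    rw [← mul_add, ← inner_add_left]
    have : A i (xprev - xstar) + A i (xcur - xprev) = A i (xcur - xstar) := by
      rw [← map_add]
      congr 1
      abel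
    rw [this]
  -- split Phi sum
  have E3 : (∑ l, (-(⟪A l (xcur - xstar), yh l - ycur l⟫)
            + (1 / 2) * ((σ l)⁻¹ * ‖yh l - ycur l‖ ^ 2)
            + (1 / 2) * ((σ l)⁻¹ * (‖yh l - ystar l‖ ^ 2 - ‖ycur l - ystar l‖ ^ 2))))
      = (∑ i, (σ i)⁻¹ * ((‖yh i - ycur i‖ ^ 2 + ‖yh i - ystar i‖ ^ 2
            - ‖ycur i - ystar i‖ ^ 2) / 2))
        - (∑ i, (⟪A i (xcur - xstar), yh i - ycur i⟫
            + ⟪A i (xcur - xstar), ycur i - ystar i⟫))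
        + (∑ i, (⟪A i (xcur - xstar), ycur i - ystar i⟫
            + (p i)⁻¹ * ⟪A i (xcur - xstar), ycur i - yprev i⟫))
        - ∑ i, (p i)⁻¹ * ⟪A i (xcur - xstar), ycur i - yprev i⟫ := by
    rw [← Finset.sum_sub_distrib, ← Finset.sum_add_distrib, ← Finset.sum_sub_distrib]
    refine Finset.sum_congr rfl fun i _ => ?_
    ring
  linarith [F1, F2sum, E3, E4]
end
end

section
/- Error bound via metric subregularity (inequality (4.12) in the proof of Theorem 4.6): suppose the operator F is metrically subregular at ẑ^{k+1} = (x^{k+1}, ŷ^{k+1}) for 0 with constant η in the weighted norm ‖·‖_S, i.e. dist_S(z, Z^*) ≤ η dist_S(0, Fz) on a neighborhood containing the relevant points. Then ½ dist²_S(z^k, Z^*) = ½‖x^k − x̃_*^k‖²_{τ^{-1}} + ½‖y^k − y_*^k‖²_{D(σ)^{-1}} ≤ (2 + 2η²‖N − H‖²) · E_k[½‖x^{k+1} − x^k‖²_{τ^{-1}} + ½‖y^{k+1} − y^k‖²_{D(σ)^{-1}P^{-1}}], where (x̃_*^k, y_*^k) is the projection of z^k = (x^k, y^k) onto Z^* in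 the norm ‖·‖_S. -/
noncomputable section

open Finset

local notation "⟪" x ", " y "⟫" => @inner ℝ _ _ x y

lemma prox_subdiff {E : Type*} [NormedAddCommGroup E] [InnerProductSpace ℝ E]
    {t : ℝ} (ht : 0 < t) {h : E → ℝ} (hh : ConvexOn ℝ Set.univ h)
    {u v : E} (hpx : IsProx t h u v) : t⁻¹ • (u - v) ∈ subdiffAt h v := by
  intro z
  refine le_of_forall_pos_le_add fun ε hε => ?_
  rcases eq_or_ne z v with rfl | hzv
  · simp only [sub_self, inner_zero_right]
    linarith
  · have hc : (0:ℝ) < ‖z - v‖ ^ 2 := by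
      have h0 : (0:ℝ) < ‖z - v‖ := norm_pos_iff.mpr (sub_ne_zero.mpr hzv)
      positivity
    set lam : ℝ := min 1 (2 * t * ε / ‖z - v‖ ^ 2) with hlamdef
    have hlam0 : 0 < lam := lt_min one_pos (div_pos (by positivity) hc)
    have hlam1 : lam ≤ 1 := min_le_left _ _
    have hlamc : lam * ‖z - v‖ ^ 2 ≤ 2 * t * ε :=
      (le_div_iff₀ hc).mp (min_le_right _ _)
    have h2t : (0:ℝ) < 2 * t := by linarith
    have H1 := hpx (v + lam • (z - v))
    have Hconv : h (v + lam • (z - v)) ≤ (1 - lam) * h v + lam * h z := by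
      have heq : (1 - lam) • v + lam • z = v + lam • (z - v) := by
        rw [sub_smul, one_smul, smul_sub]; abel
      have := hh.2 (Set.mem_univ v) (Set.mem_univ z) (by linarith : (0:ℝ) ≤ 1 - lam)
        hlam0.le (by ring)
      rw [heq] at this
      simpa [smul_eq_mul] using this
    have Hnorm : ‖v + lam • (z - v) - u‖ ^ 2
        = ‖v - u‖ ^ 2 + 2 * (lam * ⟪v - u, z - v⟫) + lam ^ 2 * ‖z - v‖ ^ 2 := by
      have harg : v + lam • (z - v) - u = (v - u) + lam • (z - v) := by abel
      rw [harg, norm_add_sq_real, real_inner_smul_right, norm_smul, Real.norm_eq_abs,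
        abs_of_pos hlam0, mul_pow]
    rw [Hnorm] at H1
    have H1' := mul_le_mul_of_nonneg_right H1 h2t.le
    rw [add_mul, add_mul, div_mul_cancel₀ _ h2t.ne', div_mul_cancel₀ _ h2t.ne'] at H1'
    -- H1' : h v * (2*t) + ‖v-u‖^2 ≤ h (v+lam•(z-v)) * (2*t) + (‖v-u‖^2 + 2*(lam*I) + lam^2*c)
    have Hchain : h v * (2*t) + ‖v - u‖ ^ 2
        ≤ ((1 - lam) * h v + lam * h z) * (2*t)
          + (‖v - u‖ ^ 2 + 2 * (lam * ⟪v - u, z - v⟫) + lam ^ 2 * ‖z - v‖ ^ 2) := by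
      have := mul_le_mul_of_nonneg_right Hconv h2t.le
      linarith
    have hl2 : lam * (lam * ‖z - v‖ ^ 2) ≤ lam * (2 * t * ε) :=
      mul_le_mul_of_nonneg_left hlamc hlam0.le
    have key2 : h v * (2*t) ≤ h z * (2*t) + 2 * ⟪v - u, z - v⟫ + 2 * t * ε := by
      nlinarith [Hchain, hl2, hlam0]
    have hip : ⟪t⁻¹ • (u - v), z - v⟫ = -(t⁻¹ * ⟪v - u, z - v⟫) := by
      rw [real_inner_smul_left, show u - v = -(v - u) by abel, inner_neg_left]
      ring
    rw [hip]
    have htI : t⁻¹ * ⟪v - u, z - v⟫ * t = ⟪v - u, z - v⟫ := by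
      rw [mul_comm, ← mul_assoc, mul_inv_cancel₀ ht.ne', one_mul]
    nlinarith [key2, h2t, htI]

set_option maxHeartbeats 1000000 in
/-- Error bound via metric subregularity (inequality (4.12) in the proof of Theorem 4.6).
If `F` is metrically subregular with constant `η` in the `S`-weighted norm at every
candidate point `ẑ^{k+1} = (x̂(i), ŷ)`, and `cNH` bounds the `S̄P̄`-operator norm of
`N − H`, then `½ dist²_S(z^k, Z^*) ≤ (2 + 2η²cNH²) E_k[½‖x^{k+1} − x^k‖²_{τ⁻¹}
  + ½‖y^{k+1} − y^k‖²_{D(σ)⁻¹P⁻¹}]`, with `(x̃_*^k, y_*^k)` the `S`-projection of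
`z^k = (x^k, y^k)` onto `Z^*`. -/
theorem spdhg_error_bound_metric_subregularity
    {X : Type*} [NormedAddCommGroup X] [InnerProductSpace ℝ X] [FiniteDimensional ℝ X]
    {n : ℕ} {Y : Fin n → Type*} [∀ i, NormedAddCommGroup (Y i)]
    [∀ i, InnerProductSpace ℝ (Y i)] [∀ i, FiniteDimensional ℝ (Y i)]
    (g : X → ℝ) (fstar : ∀ i, Y i → ℝ)
    (hg : ConvexOn ℝ Set.univ g) (hfs : ∀ i, ConvexOn ℝ Set.univ (fstar i))
    (A : ∀ i, X →L[ℝ] Y i)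
    (p σ : Fin n → ℝ) (τ γ : ℝ)
    (hp : ∀ i, 0 < p i) (hpsum : ∑ i, p i = 1)
    (hτ : 0 < τ) (hσ : ∀ i, 0 < σ i) (hγ0 : 0 < γ) (hγ1 : γ < 1)
    (hstep : ∀ i, (p i)⁻¹ * τ * σ i * ‖A i‖ ^ 2 ≤ γ ^ 2)
    -- the solution set Z^* = F⁻¹(0)
    (Zs : Set (X × (∀ i, Y i)))
    (hZs : Zs = {z | -(AT A z.2) ∈ subdiffAt g z.1
      ∧ ∀ i, A i z.1 ∈ subdiffAt (fstar i) (z.2 i)})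
    (hZsne : Zs.Nonempty)
    -- current iterate (x^k, y^k), the full dual update ŷ^{k+1} = yh and the primal
    -- candidates x^{k+1} = xhat i (when i_k = i)
    (xk : X) (yk : ∀ j, Y j) (yh : ∀ j, Y j)
    (hyh : ∀ j, IsProx (σ j) (fstar j) (yk j + σ j • A j xk) (yh j))
    (xhat : Fin n → X)
    (hxhat : ∀ i, IsProx τ g
      (xk - τ • AT A (Function.update yk i
        (yk i + (1 + (p i)⁻¹) • (yh i - yk i)))) (xhat i))
    -- metric subregularity of F at each ẑ^{k+1} = (xhat i, yh) for 0, constant η, norm S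
    (η : ℝ) (hη : 0 < η)
    (hMS : ∀ i, ∀ u ∈ subdiffAt g (xhat i), ∀ v : ∀ j, Y j,
      (∀ j, v j ∈ subdiffAt (fstar j) (yh j)) →
      ∃ z ∈ Zs,
        τ⁻¹ * ‖xhat i - z.1‖ ^ 2 + ∑ j, (σ j)⁻¹ * ‖yh j - z.2 j‖ ^ 2
          ≤ η ^ 2 * (τ⁻¹ * ‖u + AT A yh‖ ^ 2
              + ∑ j, (σ j)⁻¹ * ‖v j - A j (xhat i)‖ ^ 2))
    -- cNH bounds the operator norm ‖N − H‖ in the S̄P̄-weighted norm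
    (cNH : ℝ) (hcNH0 : 0 ≤ cNH)
    (hcNH : ∀ (xv : Fin n → X) (yv : Fin n → ∀ j, Y j),
      ∑ i, p i * (τ⁻¹ * ‖AT A (yv i) - τ⁻¹ • xv i
            - (1 + (p i)⁻¹) • (A i).adjoint (yv i i)‖ ^ 2
          + ∑ j, (σ j)⁻¹ * ‖(-(A j (xv i))) - (σ j)⁻¹ • yv i j‖ ^ 2)
        ≤ cNH ^ 2 * ∑ i, p i * (τ⁻¹ * ‖xv i‖ ^ 2 + ∑ j, (σ j)⁻¹ * ‖yv i j‖ ^ 2))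
    -- (x̃_*^k, y_*^k): the projection of z^k onto Z^* in the S-weighted norm
    (xstar : X) (ystar : ∀ j, Y j) (hproj : (xstar, ystar) ∈ Zs)
    (hprojmin : ∀ z ∈ Zs,
      τ⁻¹ * ‖xk - xstar‖ ^ 2 + ∑ j, (σ j)⁻¹ * ‖yk j - ystar j‖ ^ 2
        ≤ τ⁻¹ * ‖xk - z.1‖ ^ 2 + ∑ j, (σ j)⁻¹ * ‖yk j - z.2 j‖ ^ 2) :
    (1 / 2) * (τ⁻¹ * ‖xk - xstar‖ ^ 2) + (1 / 2) * (∑ j, (σ j)⁻¹ * ‖yk j - ystar j‖ ^ 2)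
      ≤ (2 + 2 * η ^ 2 * cNH ^ 2) *
          ∑ i, p i * ((1 / 2) * (τ⁻¹ * ‖xhat i - xk‖ ^ 2)
            + (1 / 2) * ∑ j, (σ j * p j)⁻¹ *
                ‖Function.update yk i (yh i) j - yk j‖ ^ 2) := by
  classical
  have hτi : (0:ℝ) < τ⁻¹ := inv_pos.mpr hτ
  have hσi : ∀ j, (0:ℝ) < (σ j)⁻¹ := fun j => inv_pos.mpr (hσ j)
  set Ri : Fin n → ℝ := fun i =>
    τ⁻¹ * ‖(AT A fun j => yh j - yk j) - τ⁻¹ • (xhat i - xk)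
        - (1 + (p i)⁻¹) • (A i).adjoint (yh i - yk i)‖ ^ 2
      + ∑ j, (σ j)⁻¹ * ‖(-(A j (xhat i - xk))) - (σ j)⁻¹ • (yh j - yk j)‖ ^ 2 with hRi
  set Ei : Fin n → ℝ := fun i =>
    τ⁻¹ * ‖xhat i - xk‖ ^ 2 + ∑ j, (σ j)⁻¹ * ‖yh j - yk j‖ ^ 2 with hEi
  set W : ℝ := ∑ i, p i * Ei i with hWdef
  set D : ℝ := τ⁻¹ * ‖xk - xstar‖ ^ 2 + ∑ j, (σ j)⁻¹ * ‖yk j - ystar j‖ ^ 2 with hDdef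
  -- the (N - H) bound, instantiated
  have hW : ∑ i, p i * Ri i ≤ cNH ^ 2 * W := by
    have h0 := hcNH (fun i => xhat i - xk) (fun _ j => yh j - yk j)
    rw [hRi, hWdef, hEi]
    exact h0
  clear_value Ri Ei W D
  -- AT linearity facts
  have hATY : AT A (fun j => yh j - yk j) = AT A yh - AT A yk := by
    simp [AT, map_sub, Finset.sum_sub_distrib]
  have hATupd : ∀ (i : Fin n) (w : Y i),
      AT A (Function.update yk i w) = AT A yk + (A i).adjoint (w - yk i) := by
    intro i w
    have hterm : ∀ j : Fin n, (A j).adjoint (Function.update yk i w j)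
        = (A j).adjoint (yk j) + (if j = i then (A i).adjoint (w - yk i) else 0) := by
      intro j
      rcases eq_or_ne j i with rfl | hj
      · simp [map_sub]
      · simp [Function.update_of_ne hj, hj]
    simp [AT, hterm, Finset.sum_add_distrib, Finset.sum_ite_eq]
  -- dual subgradients
  have hv : ∀ j, ((σ j)⁻¹ • (yk j - yh j) + A j xk) ∈ subdiffAt (fstar j) (yh j) := by
    intro j
    have h0 := prox_subdiff (hσ j) (hfs j) (hyh j)
    have h1 : (σ j)⁻¹ • ((yk j + σ j • A j xk) - yh j)
        = (σ j)⁻¹ • (yk j - yh j) + A j xk := by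
      rw [show (yk j + σ j • A j xk) - yh j = (yk j - yh j) + σ j • A j xk by abel,
        smul_add, smul_smul, inv_mul_cancel₀ (hσ j).ne', one_smul]
    rwa [h1] at h0
  -- primal subgradients
  have hu : ∀ i, (τ⁻¹ • (xk - xhat i) - AT A (Function.update yk i
      (yk i + (1 + (p i)⁻¹) • (yh i - yk i)))) ∈ subdiffAt g (xhat i) := by
    intro i
    have h0 := prox_subdiff hτ hg (hxhat i)
    have h1 : τ⁻¹ • ((xk - τ • AT A (Function.update yk i
          (yk i + (1 + (p i)⁻¹) • (yh i - yk i)))) - xhat i)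
        = τ⁻¹ • (xk - xhat i) - AT A (Function.update yk i
          (yk i + (1 + (p i)⁻¹) • (yh i - yk i))) := by
      rw [show (xk - τ • AT A (Function.update yk i
          (yk i + (1 + (p i)⁻¹) • (yh i - yk i)))) - xhat i
        = (xk - xhat i) - τ • AT A (Function.update yk i
          (yk i + (1 + (p i)⁻¹) • (yh i - yk i))) by abel,
        smul_sub, smul_smul, inv_mul_cancel₀ hτ.ne', one_smul]
    rwa [h1] at h0
  -- key vector identities
  have hkey1 : ∀ i, (τ⁻¹ • (xk - xhat i) - AT A (Function.update yk i
        (yk i + (1 + (p i)⁻¹) • (yh i - yk i)))) + AT A yh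
      = (AT A fun j => yh j - yk j) - τ⁻¹ • (xhat i - xk)
          - (1 + (p i)⁻¹) • (A i).adjoint (yh i - yk i) := by
    intro i
    rw [hATupd i, add_sub_cancel_left, map_smul, hATY, smul_sub, smul_sub]
    abel
  have hkey2 : ∀ (i : Fin n) (j : Fin n),
      ((σ j)⁻¹ • (yk j - yh j) + A j xk) - A j (xhat i)
      = (-(A j (xhat i - xk))) - (σ j)⁻¹ • (yh j - yk j) := by
    intro i j
    rw [map_sub, smul_sub, smul_sub]
    abel
  -- Step A: pointwise bound
  have hstepA : ∀ i, D ≤ 2 * Ei i + 2 * η ^ 2 * Ri i := by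
    intro i
    obtain ⟨z, hz, hd⟩ := hMS i _ (hu i) _ hv
    rw [hkey1 i] at hd
    simp only [hkey2] at hd
    have hd' : τ⁻¹ * ‖xhat i - z.1‖ ^ 2 + ∑ j, (σ j)⁻¹ * ‖yh j - z.2 j‖ ^ 2
        ≤ η ^ 2 * Ri i := by
      rw [hRi]; exact hd
    have hprojz := hprojmin z hz
    have hxq : ‖xk - z.1‖ ^ 2 ≤ 2 * ‖xhat i - xk‖ ^ 2 + 2 * ‖xhat i - z.1‖ ^ 2 := by
      have h1 : ‖xk - z.1‖ ≤ ‖xk - xhat i‖ + ‖xhat i - z.1‖ :=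
        norm_sub_le_norm_sub_add_norm_sub _ _ _
      have h2 : ‖xk - xhat i‖ = ‖xhat i - xk‖ := norm_sub_rev _ _
      nlinarith [norm_nonneg (xk - z.1), norm_nonneg (xk - xhat i),
        norm_nonneg (xhat i - z.1), sq_nonneg (‖xk - xhat i‖ - ‖xhat i - z.1‖)]
    have hxsum : τ⁻¹ * ‖xk - z.1‖ ^ 2
        ≤ 2 * (τ⁻¹ * ‖xhat i - xk‖ ^ 2) + 2 * (τ⁻¹ * ‖xhat i - z.1‖ ^ 2) := by
      calc τ⁻¹ * ‖xk - z.1‖ ^ 2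
          ≤ τ⁻¹ * (2 * ‖xhat i - xk‖ ^ 2 + 2 * ‖xhat i - z.1‖ ^ 2) :=
            mul_le_mul_of_nonneg_left hxq hτi.le
        _ = 2 * (τ⁻¹ * ‖xhat i - xk‖ ^ 2) + 2 * (τ⁻¹ * ‖xhat i - z.1‖ ^ 2) := by ring
    have hy2 : ∀ j, (σ j)⁻¹ * ‖yk j - z.2 j‖ ^ 2
        ≤ 2 * ((σ j)⁻¹ * ‖yh j - yk j‖ ^ 2) + 2 * ((σ j)⁻¹ * ‖yh j - z.2 j‖ ^ 2) := by
      intro j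
      have h1 : ‖yk j - z.2 j‖ ≤ ‖yk j - yh j‖ + ‖yh j - z.2 j‖ :=
        norm_sub_le_norm_sub_add_norm_sub _ _ _
      have h2 : ‖yk j - yh j‖ = ‖yh j - yk j‖ := norm_sub_rev _ _
      have hq : ‖yk j - z.2 j‖ ^ 2 ≤ 2 * ‖yh j - yk j‖ ^ 2 + 2 * ‖yh j - z.2 j‖ ^ 2 := by
        nlinarith [norm_nonneg (yk j - z.2 j), norm_nonneg (yk j - yh j),
          norm_nonneg (yh j - z.2 j), sq_nonneg (‖yk j - yh j‖ - ‖yh j - z.2 j‖)]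
      calc (σ j)⁻¹ * ‖yk j - z.2 j‖ ^ 2
          ≤ (σ j)⁻¹ * (2 * ‖yh j - yk j‖ ^ 2 + 2 * ‖yh j - z.2 j‖ ^ 2) :=
            mul_le_mul_of_nonneg_left hq (hσi j).le
        _ = 2 * ((σ j)⁻¹ * ‖yh j - yk j‖ ^ 2) + 2 * ((σ j)⁻¹ * ‖yh j - z.2 j‖ ^ 2) := by
            ring
    have hysum : ∑ j, (σ j)⁻¹ * ‖yk j - z.2 j‖ ^ 2
        ≤ 2 * (∑ j, (σ j)⁻¹ * ‖yh j - yk j‖ ^ 2)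
          + 2 * (∑ j, (σ j)⁻¹ * ‖yh j - z.2 j‖ ^ 2) := by
      calc ∑ j, (σ j)⁻¹ * ‖yk j - z.2 j‖ ^ 2
          ≤ ∑ j, (2 * ((σ j)⁻¹ * ‖yh j - yk j‖ ^ 2)
              + 2 * ((σ j)⁻¹ * ‖yh j - z.2 j‖ ^ 2)) :=
            Finset.sum_le_sum fun j _ => hy2 j
        _ = _ := by
            rw [Finset.sum_add_distrib, ← Finset.mul_sum, ← Finset.mul_sum]
    have hEii : Ei i = τ⁻¹ * ‖xhat i - xk‖ ^ 2 + ∑ j, (σ j)⁻¹ * ‖yh j - yk j‖ ^ 2 := by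
      rw [hEi]
    linarith [hprojz, hd', hxsum, hysum]
  -- Step B: sum up
  have hmain : D ≤ (2 + 2 * η ^ 2 * cNH ^ 2) * W := by
    have h1 : D ≤ ∑ i, p i * (2 * Ei i + 2 * η ^ 2 * Ri i) := by
      calc D = ∑ i, p i * D := by rw [← Finset.sum_mul, hpsum, one_mul]
      _ ≤ _ := Finset.sum_le_sum fun i _ =>
        mul_le_mul_of_nonneg_left (hstepA i) (hp i).le
    have h2 : ∑ i, p i * (2 * Ei i + 2 * η ^ 2 * Ri i)
        = 2 * (∑ i, p i * Ei i) + 2 * η ^ 2 * (∑ i, p i * Ri i) := by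
      rw [Finset.mul_sum, Finset.mul_sum, ← Finset.sum_add_distrib]
      exact Finset.sum_congr rfl fun i _ => by ring
    have h4 : 2 * η ^ 2 * (∑ i, p i * Ri i) ≤ 2 * η ^ 2 * (cNH ^ 2 * W) :=
      mul_le_mul_of_nonneg_left hW (by positivity)
    linarith [h1, h2, h4, hWdef]
  -- rewrite the goal
  have hupd : ∀ i, ∑ j, (σ j * p j)⁻¹ * ‖Function.update yk i (yh i) j - yk j‖ ^ 2
      = (σ i * p i)⁻¹ * ‖yh i - yk i‖ ^ 2 := by
    intro i
    rw [Finset.sum_eq_single i]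
    · rw [Function.update_self]
    · intro j _ hj; simp [Function.update_of_ne hj]
    · simp
  have hRHS : ∑ i, p i * ((1 / 2) * (τ⁻¹ * ‖xhat i - xk‖ ^ 2)
        + (1 / 2) * ∑ j, (σ j * p j)⁻¹ * ‖Function.update yk i (yh i) j - yk j‖ ^ 2)
      = (1 / 2) * W := by
    have hps : ∀ i, p i * (σ i * p i)⁻¹ = (σ i)⁻¹ := by
      intro i
      rw [mul_inv, mul_comm (σ i)⁻¹, ← mul_assoc, mul_inv_cancel₀ (hp i).ne', one_mul]
    have e1 : ∀ i : Fin n, p i * ((1 / 2) * (τ⁻¹ * ‖xhat i - xk‖ ^ 2)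
          + (1 / 2) * ∑ j, (σ j * p j)⁻¹ * ‖Function.update yk i (yh i) j - yk j‖ ^ 2)
        = (1/2) * (p i * (τ⁻¹ * ‖xhat i - xk‖ ^ 2))
          + (1/2) * ((σ i)⁻¹ * ‖yh i - yk i‖ ^ 2) := by
      intro i
      rw [hupd i, ← hps i]
      ring
    have e2 : W = ∑ i, p i * (τ⁻¹ * ‖xhat i - xk‖ ^ 2)
        + ∑ j, (σ j)⁻¹ * ‖yh j - yk j‖ ^ 2 := by
      rw [hWdef]
      have e21 : ∀ i : Fin n, p i * Ei i
          = p i * (τ⁻¹ * ‖xhat i - xk‖ ^ 2)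
            + p i * (∑ j, (σ j)⁻¹ * ‖yh j - yk j‖ ^ 2) := by
        intro i; rw [hEi]; ring
      rw [Finset.sum_congr rfl fun i _ => e21 i, Finset.sum_add_distrib,
        ← Finset.sum_mul, hpsum, one_mul]
    rw [Finset.sum_congr rfl fun i _ => e1 i, Finset.sum_add_distrib,
      ← Finset.mul_sum, ← Finset.mul_sum, e2]
    ring
  rw [hRHS]
  have hDeq : (1 / 2) * (τ⁻¹ * ‖xk - xstar‖ ^ 2)
      + (1 / 2) * (∑ j, (σ j)⁻¹ * ‖yk j - ystar j‖ ^ 2) = (1/2) * D := by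
    rw [hDdef]; ring
  rw [hDeq, show (2 + 2 * η ^ 2 * cNH ^ 2) * ((1 / 2) * W)
      = (1/2) * ((2 + 2 * η ^ 2 * cNH ^ 2) * W) from by ring]
  exact mul_le_mul_of_nonneg_left hmain (by norm_num)
end
end

section
/- Projected-distance decrease (inequality (4.8) in the proof of Theorem 4.6): with Δ^{k−1} = min_{(x,y) ∈ Z^*} V_k(x^{k−1} − x, y^k − y) and Δ^k = min_{(x,y) ∈ Z^*} V_{k+1}(x^k − x, y^{k+1} − y), it holds for every k ≥ 1 that E_k[Δ^k] ≤ Δ^{k−1} − V(z^k − z^{k−1}), where z^k = (x^k, y^k). -/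
noncomputable section

open Finset

local notation "⟪" x ", " y "⟫" => @inner ℝ _ _ x y

lemma prox_ineq {E : Type*} [NormedAddCommGroup E] [InnerProductSpace ℝ E]
    {t : ℝ} (ht : 0 < t) {h : E → ℝ} (hh : ConvexOn ℝ Set.univ h)
    {u v : E} (hv : IsProx t h u v) (w : E) :
    h v + t⁻¹ * ⟪u - v, w - v⟫ ≤ h w := by
  apply le_of_forall_pos_le_add
  intro ε hε
  set θ : ℝ := min 1 (2*t*ε/(‖w - v‖^2+1)) with hθdef
  have hN : (0:ℝ) < ‖w - v‖^2 + 1 := by positivity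
  have hθ0 : 0 < θ := lt_min one_pos (by positivity)
  have hθ1 : θ ≤ 1 := min_le_left _ _
  have key := hv (v + θ • (w - v))
  have hconv := hh.2 (Set.mem_univ v) (Set.mem_univ w)
    (by linarith : (0:ℝ) ≤ 1 - θ) hθ0.le (by ring)
  have heq : (1-θ) • v + θ • w = v + θ • (w - v) := by module
  rw [heq] at hconv
  simp only [smul_eq_mul] at hconv
  have hnorm : ‖v + θ • (w - v) - u‖^2
      = ‖v - u‖^2 + 2*θ*⟪v-u, w-v⟫ + θ^2*‖w-v‖^2 := by
    have e : v + θ • (w-v) - u = (v-u) + θ • (w-v) := by abel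
    rw [e, norm_add_sq_real, real_inner_smul_right, norm_smul]
    simp [abs_of_pos hθ0]
    ring
  rw [hnorm] at key
  have hdiv : (‖v-u‖^2 + 2*θ*⟪v-u, w-v⟫ + θ^2*‖w-v‖^2)/(2*t)
      = ‖v-u‖^2/(2*t) + θ*(⟪v-u, w-v⟫/t) + θ*(θ*‖w-v‖^2/(2*t)) := by
    field_simp
  rw [hdiv] at key
  have step : h v ≤ h w + ⟪v-u, w-v⟫/t + θ*‖w-v‖^2/(2*t) := by
    have h2 : θ * (h v) ≤ θ * (h w + ⟪v-u, w-v⟫/t + θ*‖w-v‖^2/(2*t)) := by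
      nlinarith [key, hconv]
    exact le_of_mul_le_mul_left h2 hθ0
  have hθbound : θ*‖w-v‖^2/(2*t) ≤ ε := by
    have h2 : θ ≤ 2*t*ε/(‖w-v‖^2+1) := min_le_right _ _
    rw [div_le_iff₀ (by positivity : (0:ℝ) < 2*t)]
    calc θ*‖w-v‖^2 ≤ (2*t*ε/(‖w-v‖^2+1))*(‖w-v‖^2+1) := by
          nlinarith [sq_nonneg ‖w-v‖]
      _ = 2*t*ε := by field_simp
      _ = ε*(2*t) := by ring
  have hinner : ⟪u - v, w - v⟫ = -⟪v - u, w - v⟫ := by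
    rw [← neg_sub v u, inner_neg_left]
  rw [hinner]
  have : t⁻¹ * ⟪v-u, w-v⟫ = ⟪v-u, w-v⟫/t := by ring
  linarith [step, hθbound, this]

lemma sum_update_eq {n : ℕ} {β : Fin n → Type*} (y : ∀ i, β i) (l : Fin n) (v : β l)
    (G : ∀ i, β i → ℝ) :
    ∑ i, G i (Function.update y l v i) = (∑ i, G i (y i)) - G l (y l) + G l v := by
  rw [Finset.sum_eq_sum_sdiff_singleton_add (Finset.mem_univ l)
      (fun i => G i (Function.update y l v i)),
    Finset.sum_eq_sum_sdiff_singleton_add (Finset.mem_univ l) (fun i => G i (y i))]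
  rw [Function.update_self]
  have : ∑ i ∈ Finset.univ \ {l}, G i (Function.update y l v i)
      = ∑ i ∈ Finset.univ \ {l}, G i (y i) := by
    apply Finset.sum_congr rfl
    intro i hi
    have : i ≠ l := by simpa using (Finset.mem_sdiff.mp hi).2
    rw [Function.update_of_ne this]
  rw [this]; ring

lemma cos3 {E : Type*} [NormedAddCommGroup E] [InnerProductSpace ℝ E] (a b c : E) :
    ‖a - c‖^2 = ‖a - b‖^2 - 2*⟪a - b, c - b⟫ + ‖c - b‖^2 := by
  have e : a - c = (a - b) - (c - b) := by abel
  rw [e, norm_sub_sq_real]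

/-- Projected-distance decrease (inequality (4.8) in the proof of Theorem 4.6):
with `Δ^{k−1} = min_{z ∈ Z^*} V_k(x^{k−1} − x, y^k − y)` (attained at `za`) and
`Δ^k = min_{z ∈ Z^*} V_{k+1}(x^k − x, y^{k+1} − y)` (attained, for each outcome `i_k = l`,
at `zb l`), one has `E_k[Δ^k] ≤ Δ^{k−1} − V(z^k − z^{k−1})`, where `E_k` is the
`p`-weighted average over the index `i_k` drawn at step `k`. -/
theorem spdhg_projected_distance_decrease
    {X : Type*} [NormedAddCommGroup X] [InnerProductSpace ℝ X] [FiniteDimensional ℝ X]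
    {n : ℕ} {Y : Fin n → Type*} [∀ i, NormedAddCommGroup (Y i)]
    [∀ i, InnerProductSpace ℝ (Y i)] [∀ i, FiniteDimensional ℝ (Y i)]
    (g : X → ℝ) (fstar : ∀ i, Y i → ℝ)
    (hg : ConvexOn ℝ Set.univ g) (hfs : ∀ i, ConvexOn ℝ Set.univ (fstar i))
    (A : ∀ i, X →L[ℝ] Y i)
    (p σ : Fin n → ℝ) (τ γ : ℝ)
    (hp : ∀ i, 0 < p i) (hpsum : ∑ i, p i = 1)
    (hτ : 0 < τ) (hσ : ∀ i, 0 < σ i) (hγ0 : 0 < γ) (hγ1 : γ < 1)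
    (hstep : ∀ i, (p i)⁻¹ * τ * σ i * ‖A i‖ ^ 2 ≤ γ ^ 2)
    -- the solution set Z^*
    (Zs : Set (X × (∀ i, Y i)))
    (hZs : Zs = {z | -(AT A z.2) ∈ subdiffAt g z.1
      ∧ ∀ i, A i z.1 ∈ subdiffAt (fstar i) (z.2 i)})
    (hZsne : Zs.Nonempty)
    -- SPDHG iterates at step k: x^{k−1}, y^{k−1}, y^k, x^k, ŷ^{k+1}
    (xprev : X) (yprev ycur : ∀ i, Y i) (xcur : X)
    (hx : IsProx τ g
      (xprev - τ • AT A (fun j => ycur j + (p j)⁻¹ • (ycur j - yprev j))) xcur)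
    (yh : ∀ i, Y i)
    (hyh : ∀ i, IsProx (σ i) (fstar i) (ycur i + σ i • A i xcur) (yh i))
    -- za attains Δ^{k−1} = min_{z ∈ Z^*} V_k(x^{k−1} − x, y^k − y)
    (za : X × (∀ i, Y i)) (hza : za ∈ Zs)
    (hzamin : ∀ z ∈ Zs,
      ((1 / 2) * (τ⁻¹ * ‖xprev - za.1‖ ^ 2)
        - (∑ i, (p i)⁻¹ * ⟪A i (xprev - za.1), ycur i - yprev i⟫)
        + (1 / 2) * (∑ i, (σ i * p i)⁻¹ * ‖ycur i - yprev i‖ ^ 2)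
        + (1 / 2) * (∑ i, (σ i * p i)⁻¹ * ‖ycur i - za.2 i‖ ^ 2))
      ≤ ((1 / 2) * (τ⁻¹ * ‖xprev - z.1‖ ^ 2)
        - (∑ i, (p i)⁻¹ * ⟪A i (xprev - z.1), ycur i - yprev i⟫)
        + (1 / 2) * (∑ i, (σ i * p i)⁻¹ * ‖ycur i - yprev i‖ ^ 2)
        + (1 / 2) * (∑ i, (σ i * p i)⁻¹ * ‖ycur i - z.2 i‖ ^ 2)))
    -- zb l attains Δ^k = min_{z ∈ Z^*} V_{k+1}(x^k − x, y^{k+1} − y) when i_k = l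
    (zb : Fin n → X × (∀ i, Y i)) (hzb : ∀ l, zb l ∈ Zs)
    (hzbmin : ∀ l, ∀ z ∈ Zs,
      ((1 / 2) * (τ⁻¹ * ‖xcur - (zb l).1‖ ^ 2)
        - (∑ i, (p i)⁻¹ * ⟪A i (xcur - (zb l).1),
            Function.update ycur l (yh l) i - ycur i⟫)
        + (1 / 2) * (∑ i, (σ i * p i)⁻¹ *
            ‖Function.update ycur l (yh l) i - ycur i‖ ^ 2)
        + (1 / 2) * (∑ i, (σ i * p i)⁻¹ *
            ‖Function.update ycur l (yh l) i - (zb l).2 i‖ ^ 2))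
      ≤ ((1 / 2) * (τ⁻¹ * ‖xcur - z.1‖ ^ 2)
        - (∑ i, (p i)⁻¹ * ⟪A i (xcur - z.1),
            Function.update ycur l (yh l) i - ycur i⟫)
        + (1 / 2) * (∑ i, (σ i * p i)⁻¹ *
            ‖Function.update ycur l (yh l) i - ycur i‖ ^ 2)
        + (1 / 2) * (∑ i, (σ i * p i)⁻¹ *
            ‖Function.update ycur l (yh l) i - z.2 i‖ ^ 2))) :
    -- E_k[Δ^k] ≤ Δ^{k−1} − V(z^k − z^{k−1})
    (∑ l, p l *
        ((1 / 2) * (τ⁻¹ * ‖xcur - (zb l).1‖ ^ 2)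
          - (∑ i, (p i)⁻¹ * ⟪A i (xcur - (zb l).1),
              Function.update ycur l (yh l) i - ycur i⟫)
          + (1 / 2) * (∑ i, (σ i * p i)⁻¹ *
              ‖Function.update ycur l (yh l) i - ycur i‖ ^ 2)
          + (1 / 2) * (∑ i, (σ i * p i)⁻¹ *
              ‖Function.update ycur l (yh l) i - (zb l).2 i‖ ^ 2)))
    ≤
    ((1 / 2) * (τ⁻¹ * ‖xprev - za.1‖ ^ 2)
      - (∑ i, (p i)⁻¹ * ⟪A i (xprev - za.1), ycur i - yprev i⟫)
      + (1 / 2) * (∑ i, (σ i * p i)⁻¹ * ‖ycur i - yprev i‖ ^ 2)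
      + (1 / 2) * (∑ i, (σ i * p i)⁻¹ * ‖ycur i - za.2 i‖ ^ 2))
    - ((1 / 2) * (τ⁻¹ * ‖xcur - xprev‖ ^ 2)
        + (1 / 2) * (∑ i, (σ i * p i)⁻¹ * ‖ycur i - yprev i‖ ^ 2)
        + ∑ i, (p i)⁻¹ * ⟪A i (xcur - xprev), ycur i - yprev i⟫) := by
  -- unpack the fact that za is a saddle point
  rw [hZs] at hza
  obtain ⟨hza1, hza2⟩ := hza
  -- adjoint identity
  have hAT : ∀ (w : ∀ i, Y i) (u : X), ⟪AT A w, u⟫ = ∑ i, ⟪A i u, w i⟫ := by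
    intro w u
    unfold AT
    rw [sum_inner]
    exact Finset.sum_congr rfl fun i _ => by
      rw [ContinuousLinearMap.adjoint_inner_left, real_inner_comm]
  -- dual prox inequality combined with saddle point (II_i)
  have hII : ∀ i, (σ i)⁻¹ * ⟪ycur i - yh i, za.2 i - yh i⟫
      ≤ ⟪A i (za.1 - xcur), za.2 i - yh i⟫ := by
    intro i
    have h1 := prox_ineq (hσ i) (hfs i) (hyh i) (za.2 i)
    have h2 := hza2 i (yh i)
    have e1 : ycur i + σ i • A i xcur - yh i = (ycur i - yh i) + σ i • A i xcur := by abel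
    rw [e1, inner_add_left, real_inner_smul_left] at h1
    have e3 : (σ i)⁻¹ * (⟪ycur i - yh i, za.2 i - yh i⟫ + σ i * ⟪A i xcur, za.2 i - yh i⟫)
        = (σ i)⁻¹ * ⟪ycur i - yh i, za.2 i - yh i⟫ + ⟪A i xcur, za.2 i - yh i⟫ := by
      field_simp [(hσ i).ne']
    rw [e3] at h1
    have e2 : ⟪A i za.1, yh i - za.2 i⟫ = -⟪A i za.1, za.2 i - yh i⟫ := by
      rw [← inner_neg_right]; congr 1; abel
    rw [e2] at h2
    have e4 : ⟪A i (za.1 - xcur), za.2 i - yh i⟫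
        = ⟪A i za.1, za.2 i - yh i⟫ - ⟪A i xcur, za.2 i - yh i⟫ := by
      rw [map_sub, inner_sub_left]
    rw [e4]
    linarith
  -- primal prox inequality combined with saddle point (I)
  have hI : τ⁻¹ * ⟪xprev - xcur, za.1 - xcur⟫
      ≤ ∑ i, ⟪A i (za.1 - xcur), (ycur i + (p i)⁻¹ • (ycur i - yprev i)) - za.2 i⟫ := by
    have h1 := prox_ineq hτ hg hx za.1
    have h2 := hza1 xcur
    have e1 : xprev - τ • AT A (fun j => ycur j + (p j)⁻¹ • (ycur j - yprev j)) - xcur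
        = (xprev - xcur) - τ • AT A (fun j => ycur j + (p j)⁻¹ • (ycur j - yprev j)) := by
      abel
    rw [e1, inner_sub_left, real_inner_smul_left] at h1
    have e3 : τ⁻¹ * (⟪xprev - xcur, za.1 - xcur⟫
          - τ * ⟪AT A (fun j => ycur j + (p j)⁻¹ • (ycur j - yprev j)), za.1 - xcur⟫)
        = τ⁻¹ * ⟪xprev - xcur, za.1 - xcur⟫
          - ⟪AT A (fun j => ycur j + (p j)⁻¹ • (ycur j - yprev j)), za.1 - xcur⟫ := by
      field_simp [hτ.ne']
    rw [e3] at h1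
    have e4 : ⟪-(AT A za.2), xcur - za.1⟫ = -⟪AT A za.2, xcur - za.1⟫ := inner_neg_left _ _
    rw [e4] at h2
    have e5 : ⟪AT A (fun j => ycur j + (p j)⁻¹ • (ycur j - yprev j)), za.1 - xcur⟫
        = ∑ i, ⟪A i (za.1 - xcur), ycur i + (p i)⁻¹ • (ycur i - yprev i)⟫ :=
      hAT _ _
    have e6 : ⟪AT A za.2, xcur - za.1⟫ = -∑ i, ⟪A i (za.1 - xcur), za.2 i⟫ := by
      rw [hAT]
      rw [← Finset.sum_neg_distrib]
      exact Finset.sum_congr rfl fun i _ => by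
        rw [← inner_neg_left, ← map_neg, neg_sub]
    rw [e5] at h1
    rw [e6] at h2
    have e7 : ∑ i, ⟪A i (za.1 - xcur), (ycur i + (p i)⁻¹ • (ycur i - yprev i)) - za.2 i⟫
        = (∑ i, ⟪A i (za.1 - xcur), ycur i + (p i)⁻¹ • (ycur i - yprev i)⟫)
          - ∑ i, ⟪A i (za.1 - xcur), za.2 i⟫ := by
      rw [← Finset.sum_sub_distrib]
      exact Finset.sum_congr rfl fun i _ => inner_sub_right _ _ _
    rw [e7]
    linarith
  -- compute the sums over the update
  have hupd1 : ∀ l, (∑ i, (p i)⁻¹ * ⟪A i (xcur - za.1),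
        Function.update ycur l (yh l) i - ycur i⟫)
      = (p l)⁻¹ * ⟪A l (xcur - za.1), yh l - ycur l⟫ := by
    intro l
    rw [Finset.sum_eq_single l]
    · rw [Function.update_self]
    · intro i _ hi
      rw [Function.update_of_ne hi]
      simp
    · intro h; exact absurd (Finset.mem_univ l) h
  have hupd2 : ∀ l, (∑ i, (σ i * p i)⁻¹ *
        ‖Function.update ycur l (yh l) i - ycur i‖ ^ 2)
      = (σ l * p l)⁻¹ * ‖yh l - ycur l‖ ^ 2 := by
    intro l
    rw [Finset.sum_eq_single l]
    · rw [Function.update_self]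
    · intro i _ hi
      rw [Function.update_of_ne hi]
      simp
    · intro h; exact absurd (Finset.mem_univ l) h
  have hupd3 : ∀ l, (∑ i, (σ i * p i)⁻¹ *
        ‖Function.update ycur l (yh l) i - za.2 i‖ ^ 2)
      = (∑ i, (σ i * p i)⁻¹ * ‖ycur i - za.2 i‖ ^ 2)
        - (σ l * p l)⁻¹ * ‖ycur l - za.2 l‖ ^ 2
        + (σ l * p l)⁻¹ * ‖yh l - za.2 l‖ ^ 2 := by
    intro l
    exact sum_update_eq ycur l (yh l) (fun i w => (σ i * p i)⁻¹ * ‖w - za.2 i‖ ^ 2)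
  -- per-outcome identity for the value at za
  have hterm : ∀ l, p l *
      ((1 / 2) * (τ⁻¹ * ‖xcur - za.1‖ ^ 2)
        - (∑ i, (p i)⁻¹ * ⟪A i (xcur - za.1),
            Function.update ycur l (yh l) i - ycur i⟫)
        + (1 / 2) * (∑ i, (σ i * p i)⁻¹ *
            ‖Function.update ycur l (yh l) i - ycur i‖ ^ 2)
        + (1 / 2) * (∑ i, (σ i * p i)⁻¹ *
            ‖Function.update ycur l (yh l) i - za.2 i‖ ^ 2))
      = p l * ((1 / 2) * (τ⁻¹ * ‖xcur - za.1‖ ^ 2)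
          + (1 / 2) * (∑ i, (σ i * p i)⁻¹ * ‖ycur i - za.2 i‖ ^ 2))
        + ((σ l)⁻¹ * ((1/2) * ‖yh l - ycur l‖ ^ 2 - (1/2) * ‖ycur l - za.2 l‖ ^ 2
              + (1/2) * ‖yh l - za.2 l‖ ^ 2)
           - ⟪A l (xcur - za.1), yh l - ycur l⟫) := by
    intro l
    rw [hupd1 l, hupd2 l, hupd3 l]
    have e1 : p l * (p l)⁻¹ = 1 := mul_inv_cancel₀ (hp l).ne'
    have e2 : p l * (σ l * p l)⁻¹ = (σ l)⁻¹ := by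
      rw [mul_inv, mul_comm (σ l)⁻¹, ← mul_assoc, e1, one_mul]
    linear_combination (-⟪A l (xcur - za.1), yh l - ycur l⟫) * e1
      + ((1/2) * ‖yh l - ycur l‖ ^ 2 - (1/2) * ‖ycur l - za.2 l‖ ^ 2
          + (1/2) * ‖yh l - za.2 l‖ ^ 2) * e2
  -- sum over outcomes
  have hkey : (∑ l, p l *
      ((1 / 2) * (τ⁻¹ * ‖xcur - za.1‖ ^ 2)
        - (∑ i, (p i)⁻¹ * ⟪A i (xcur - za.1),
            Function.update ycur l (yh l) i - ycur i⟫)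
        + (1 / 2) * (∑ i, (σ i * p i)⁻¹ *
            ‖Function.update ycur l (yh l) i - ycur i‖ ^ 2)
        + (1 / 2) * (∑ i, (σ i * p i)⁻¹ *
            ‖Function.update ycur l (yh l) i - za.2 i‖ ^ 2)))
      = ((1 / 2) * (τ⁻¹ * ‖xcur - za.1‖ ^ 2)
          + (1 / 2) * (∑ i, (σ i * p i)⁻¹ * ‖ycur i - za.2 i‖ ^ 2))
        + ∑ l, ((σ l)⁻¹ * ((1/2) * ‖yh l - ycur l‖ ^ 2 - (1/2) * ‖ycur l - za.2 l‖ ^ 2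
              + (1/2) * ‖yh l - za.2 l‖ ^ 2)
           - ⟪A l (xcur - za.1), yh l - ycur l⟫) := by
    rw [Finset.sum_congr rfl fun l _ => hterm l, Finset.sum_add_distrib,
      ← Finset.sum_mul, hpsum, one_mul]
  -- per-coordinate inequality from (II)
  have hclaim : ∀ l, (σ l)⁻¹ * ((1/2) * ‖yh l - ycur l‖ ^ 2 - (1/2) * ‖ycur l - za.2 l‖ ^ 2
          + (1/2) * ‖yh l - za.2 l‖ ^ 2) - ⟪A l (xcur - za.1), yh l - ycur l⟫
      ≤ ⟪A l (za.1 - xcur), za.2 l - ycur l⟫ := by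
    intro l
    have hcos := cos3 (ycur l) (yh l) (za.2 l)
    have h2 := hII l
    have e5 : (1/2) * ‖yh l - ycur l‖ ^ 2 - (1/2) * ‖ycur l - za.2 l‖ ^ 2
          + (1/2) * ‖yh l - za.2 l‖ ^ 2 = ⟪ycur l - yh l, za.2 l - yh l⟫ := by
      rw [norm_sub_rev (yh l) (ycur l), norm_sub_rev (yh l) (za.2 l)]
      linear_combination (-1/2 : ℝ) * hcos
    have e3 : ⟪A l (xcur - za.1), yh l - ycur l⟫
        = -⟪A l (za.1 - xcur), yh l - ycur l⟫ := by
      rw [← inner_neg_left, ← map_neg, neg_sub]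
    have e4 : ⟪A l (za.1 - xcur), za.2 l - yh l⟫ + ⟪A l (za.1 - xcur), yh l - ycur l⟫
        = ⟪A l (za.1 - xcur), za.2 l - ycur l⟫ := by
      rw [← inner_add_right, sub_add_sub_cancel]
    rw [e5, e3, ← e4]
    linarith
  -- combine A(za.1−xcur) sums
  have hsplit : ∀ i, ⟪A i (za.1 - xcur), (ycur i + (p i)⁻¹ • (ycur i - yprev i)) - za.2 i⟫
      + ⟪A i (za.1 - xcur), za.2 i - ycur i⟫
      = -((p i)⁻¹ * ⟪A i (xprev - za.1), ycur i - yprev i⟫)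
        - (p i)⁻¹ * ⟪A i (xcur - xprev), ycur i - yprev i⟫ := by
    intro i
    rw [← inner_add_right]
    have e1 : (ycur i + (p i)⁻¹ • (ycur i - yprev i)) - za.2 i + (za.2 i - ycur i)
        = (p i)⁻¹ • (ycur i - yprev i) := by abel
    rw [e1, real_inner_smul_right]
    have e2 : A i (za.1 - xcur) = -(A i (xprev - za.1)) - A i (xcur - xprev) := by
      rw [← map_neg, ← map_sub]
      congr 1
      abel
    rw [e2, inner_sub_left, inner_neg_left]
    ring
  have hss : (∑ i, ⟪A i (za.1 - xcur), (ycur i + (p i)⁻¹ • (ycur i - yprev i)) - za.2 i⟫)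
      + ∑ i, ⟪A i (za.1 - xcur), za.2 i - ycur i⟫
      = -(∑ i, (p i)⁻¹ * ⟪A i (xprev - za.1), ycur i - yprev i⟫)
        - ∑ i, (p i)⁻¹ * ⟪A i (xcur - xprev), ycur i - yprev i⟫ := by
    rw [← Finset.sum_add_distrib, Finset.sum_congr rfl fun i _ => hsplit i,
      Finset.sum_sub_distrib, Finset.sum_neg_distrib]
  -- cosine identity for the primal variable
  have hxcos : τ⁻¹ * ‖xcur - za.1‖ ^ 2
      = τ⁻¹ * ‖xprev - za.1‖ ^ 2 - τ⁻¹ * ‖xcur - xprev‖ ^ 2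
        + 2 * (τ⁻¹ * ⟪xprev - xcur, za.1 - xcur⟫) := by
    have hc := cos3 xprev xcur za.1
    rw [norm_sub_rev xprev xcur, norm_sub_rev za.1 xcur] at hc
    linear_combination (-τ⁻¹) * hc
  -- put everything together
  calc (∑ l, p l *
        ((1 / 2) * (τ⁻¹ * ‖xcur - (zb l).1‖ ^ 2)
          - (∑ i, (p i)⁻¹ * ⟪A i (xcur - (zb l).1),
              Function.update ycur l (yh l) i - ycur i⟫)
          + (1 / 2) * (∑ i, (σ i * p i)⁻¹ *
              ‖Function.update ycur l (yh l) i - ycur i‖ ^ 2)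
          + (1 / 2) * (∑ i, (σ i * p i)⁻¹ *
              ‖Function.update ycur l (yh l) i - (zb l).2 i‖ ^ 2)))
      ≤ ∑ l, p l *
        ((1 / 2) * (τ⁻¹ * ‖xcur - za.1‖ ^ 2)
          - (∑ i, (p i)⁻¹ * ⟪A i (xcur - za.1),
              Function.update ycur l (yh l) i - ycur i⟫)
          + (1 / 2) * (∑ i, (σ i * p i)⁻¹ *
              ‖Function.update ycur l (yh l) i - ycur i‖ ^ 2)
          + (1 / 2) * (∑ i, (σ i * p i)⁻¹ *
              ‖Function.update ycur l (yh l) i - za.2 i‖ ^ 2)) := by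
        apply Finset.sum_le_sum
        intro l _
        exact mul_le_mul_of_nonneg_left (hzbmin l za (by rw [hZs]; exact ⟨hza1, hza2⟩))
          (hp l).le
    _ = ((1 / 2) * (τ⁻¹ * ‖xcur - za.1‖ ^ 2)
          + (1 / 2) * (∑ i, (σ i * p i)⁻¹ * ‖ycur i - za.2 i‖ ^ 2))
        + ∑ l, ((σ l)⁻¹ * ((1/2) * ‖yh l - ycur l‖ ^ 2 - (1/2) * ‖ycur l - za.2 l‖ ^ 2
              + (1/2) * ‖yh l - za.2 l‖ ^ 2)
           - ⟪A l (xcur - za.1), yh l - ycur l⟫) := hkey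
    _ ≤ ((1 / 2) * (τ⁻¹ * ‖xcur - za.1‖ ^ 2)
          + (1 / 2) * (∑ i, (σ i * p i)⁻¹ * ‖ycur i - za.2 i‖ ^ 2))
        + ∑ l, ⟪A l (za.1 - xcur), za.2 l - ycur l⟫ := by
        apply add_le_add_right
        exact Finset.sum_le_sum fun l _ => hclaim l
    _ ≤ _ := by linarith [hI, hss, hxcos]
end
end
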